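/- (Two-agent MSE network MSD gap.) Let R_1 = [[|π_1|, π_1],[π_1, 1]] and R_2 = [[|π_2|, π_2],[π_2, 1]] with |π_1| < 1, |π_2| < 1, let σ_1², σ_2² > 0, q > 0, 0 ≤ r < 1. Then r·q·Tr( (R_1+R_2)⁻¹ ( σ_1²(diag(R_1) − R_1) + σ_2²(diag(R_2) − R_2) ) ) = 2 r q (π_1+π_2)(π_1 σ_1² + π_2 σ_2²) / ( 2(|π_1|+|π_2|) − (π_1+π_2)² ), and the denominator 2(|π_1|+|π_2|) − (π_1+π_2)² is strictly positive whenever (π₁,π₂) ≠ (0,0). -/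
import Mathlib


open Matrix

/-- two-agent MSE network MSD gap: with R_1 = [[|π₁|, π₁],[π₁, 1]],
R_2 = [[|π₂|, π₂],[π₂, 1]], |π₁| < 1, |π₂| < 1, σ₁², σ₂² > 0, q > 0, 0 ≤ r < 1,
r·q·Tr( (R₁+R₂)⁻¹ ( σ₁²(diag(R₁) − R₁) + σ₂²(diag(R₂) − R₂) ) )
  = 2 r q (π₁+π₂)(π₁σ₁² + π₂σ₂²) / ( 2(|π₁|+|π₂|) − (π₁+π₂)² ),
and the denominator is strictly positive whenever (π₁,π₂) ≠ (0,0). -/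
theorem stmt15 (π₁ π₂ s₁ s₂ q r : ℝ)
    (hπ₁ : |π₁| < 1) (hπ₂ : |π₂| < 1)
    (hs₁ : 0 < s₁) (hs₂ : 0 < s₂) (hq : 0 < q) (hr0 : 0 ≤ r) (hr1 : r < 1)
    (R₁ R₂ : Matrix (Fin 2) (Fin 2) ℝ)
    (hR₁ : R₁ = !![|π₁|, π₁; π₁, 1]) (hR₂ : R₂ = !![|π₂|, π₂; π₂, 1]) :
    r * q * ((R₁ + R₂)⁻¹ *
        (s₁ • (Matrix.diagonal (fun i => R₁ i i) - R₁) +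
         s₂ • (Matrix.diagonal (fun i => R₂ i i) - R₂))).trace
      = 2 * r * q * (π₁ + π₂) * (π₁ * s₁ + π₂ * s₂) /
          (2 * (|π₁| + |π₂|) - (π₁ + π₂) ^ 2) ∧
    ((π₁, π₂) ≠ (0, 0) → 0 < 2 * (|π₁| + |π₂|) - (π₁ + π₂) ^ 2) := by
  subst hR₁ hR₂
  constructor
  · have hA : (!![|π₁|, π₁; π₁, 1] + !![|π₂|, π₂; π₂, 1])
        = !![|π₁| + |π₂|, π₁ + π₂; π₁ + π₂, (2:ℝ)] := by
      ext i j
      fin_cases i <;> fin_cases j <;> simp <;> norm_num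
    have hM : (s₁ • (Matrix.diagonal (fun i => !![|π₁|, π₁; π₁, (1:ℝ)] i i) - !![|π₁|, π₁; π₁, 1]) +
         s₂ • (Matrix.diagonal (fun i => !![|π₂|, π₂; π₂, (1:ℝ)] i i) - !![|π₂|, π₂; π₂, 1]))
        = !![0, -(s₁ * π₁ + s₂ * π₂); -(s₁ * π₁ + s₂ * π₂), 0] := by
      ext i j
      fin_cases i <;> fin_cases j <;>
        simp [Matrix.diagonal_apply] <;> ring
    rw [hA, hM, Matrix.inv_def, Matrix.adjugate_fin_two_of, Matrix.det_fin_two_of,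
      Ring.inverse_eq_inv', Matrix.smul_mul, Matrix.trace_smul, Matrix.mul_fin_two,
      Matrix.trace_fin_two_of, smul_eq_mul]
    have hd : (2 * (|π₁| + |π₂|) - (π₁ + π₂) ^ 2) =
        ((|π₁| + |π₂|) * 2 - (π₁ + π₂) * (π₁ + π₂)) := by ring
    rw [hd, div_eq_mul_inv]
    ring
  · intro h
    have hne : ¬(π₁ = 0 ∧ π₂ = 0) := by simpa [Prod.ext_iff] using h
    have h2 : 0 < |π₁| + |π₂| := by
      rcases lt_or_eq_of_le (by positivity : (0:ℝ) ≤ |π₁| + |π₂|) with h' | h'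
      · exact h'
      · exfalso
        have := abs_nonneg π₁; have := abs_nonneg π₂
        exact hne ⟨abs_eq_zero.mp (by linarith), abs_eq_zero.mp (by linarith)⟩
    have hb : (π₁ + π₂) ^ 2 ≤ (|π₁| + |π₂|) ^ 2 := by
      nlinarith [abs_add_le π₁ π₂, abs_nonneg (π₁ + π₂), sq_abs (π₁ + π₂)]
    nlinarith
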